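/- Let B, L, D be n × n integer matrices with L skew-symmetric, D diagonal with strictly positive diagonal entries, and BᵀL = D (a compatible pair). Fix an index k and a sign ε ∈ {+1, −1}, and set E = E_ε(k) and F = F_ε(k) as defined from B (E_{ij} = δ_{ij} for j ≠ k, E_{kk} = −1, E_{ik} = [−ε b_{ik}]₊ for i ≠ k; F_{ij} = δ_{ij} for i ≠ k, F_{kk} = −1, F_{kj} = [ε b_{kj}]₊ for j ≠ k). Then the mutated pair B' = E·B·F, L' = Eᵀ·L·E satisfies: L' is skew-symmetric and (B')ᵀ·L' = D. In other words, Berenstein–Zelevinsky mutation of a compatible pair is again a compatible pair, with the same diagonal matrix D. -/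

import Mathlib

open Matrix

theorem stmt8 {n : ℕ} (B L D : Matrix (Fin n) (Fin n) ℤ)
    (hL : Lᵀ = -L) (hD : D.IsDiag) (hDpos : ∀ i, 0 < D i i) (hBL : Bᵀ * L = D)
    (k : Fin n) (ε : ℤ) (hε : ε = 1 ∨ ε = -1)
    (E F : Matrix (Fin n) (Fin n) ℤ)
    (hE : ∀ i j, E i j =
      if j = k then (if i = k then -1 else max (-(ε * B i k)) 0)
      else (if i = j then 1 else 0))
    (hF : ∀ i j, F i j =
      if i = k then (if j = k then -1 else max (ε * B k j) 0)
      else (if i = j then 1 else 0)) :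
    (Eᵀ * L * E)ᵀ = -(Eᵀ * L * E) ∧ (E * B * F)ᵀ * (Eᵀ * L * E) = D := by
  obtain ⟨d, hd⟩ : ∃ d : Fin n → ℤ, d = fun j => if j = k then 1 else 0 := ⟨_, rfl⟩
  obtain ⟨c, hc⟩ : ∃ c : Fin n → ℤ,
      c = fun i => if i = k then -2 else max (-(ε * B i k)) 0 := ⟨_, rfl⟩
  obtain ⟨r, hr⟩ : ∃ r : Fin n → ℤ,
      r = fun j => if j = k then -2 else max (ε * B k j) 0 := ⟨_, rfl⟩
  have hEeq : E = 1 + vecMulVec c d := by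
    ext i j
    have h := hE i j
    clear hE hF hL hBL hD hDpos hε
    simp only [h]
    simp only [Matrix.add_apply, Matrix.one_apply, vecMulVec_apply, hd, hc]
    clear hd hc hr h
    by_cases hjk : j = k <;> by_cases hik : i = k <;> by_cases hij : i = j <;>
      simp_all <;> ring
  have hFTeq : Fᵀ = 1 + vecMulVec r d := by
    ext i j
    have h := hF j i
    clear hE hF hL hBL hD hDpos hε hEeq
    rw [transpose_apply, h]
    simp only [Matrix.add_apply, Matrix.one_apply, vecMulVec_apply, hd, hr]
    clear hd hc hr h
    by_cases hjk : j = k <;> by_cases hik : i = k <;> by_cases hij : i = j <;>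
      simp_all [eq_comm] <;> ring
  -- E is an involution
  have hmulvv : ∀ (a b a' b' : Fin n → ℤ),
      vecMulVec a b * vecMulVec a' b' = (b ⬝ᵥ a') • vecMulVec a b' := by
    intro a b a' b'
    ext i j
    simp only [mul_apply, vecMulVec_apply, Matrix.smul_apply, smul_eq_mul, dotProduct,
      Finset.sum_mul]
    exact Finset.sum_congr rfl fun l _ => by ring
  have hdc : d ⬝ᵥ c = -2 := by
    have : ∀ l, d l * c l = if l = k then (-2:ℤ) else 0 := by
      intro l; rw [hd, hc]; dsimp only; split_ifs <;> ring
    rw [dotProduct, Finset.sum_congr rfl fun l _ => this l]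
    simp
  have hEE : E * E = 1 := by
    have expand : (1 + vecMulVec c d) * (1 + vecMulVec c d)
        = 1 + vecMulVec c d + vecMulVec c d + vecMulVec c d * vecMulVec c d := by
      noncomm_ring
    rw [hEeq, expand, hmulvv, hdc]
    ext i j
    simp only [Matrix.add_apply, Matrix.one_apply, vecMulVec_apply, Matrix.smul_apply, smul_eq_mul]
    ring
  -- diagonal entrywise multiplication facts
  have hDmul : ∀ (M : Matrix (Fin n) (Fin n) ℤ) i j, (D * M) i j = D i i * M i j := by
    intro M i j
    rw [mul_apply]
    exact Finset.sum_eq_single i (fun l _ hl => by rw [hD (Ne.symm hl), zero_mul])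
      (fun h => absurd (Finset.mem_univ i) h)
  have hmulD : ∀ (M : Matrix (Fin n) (Fin n) ℤ) i j, (M * D) i j = M i j * D j j := by
    intro M i j
    rw [mul_apply]
    exact Finset.sum_eq_single j (fun l _ hl => by rw [hD hl, mul_zero])
      (fun h => absurd (Finset.mem_univ j) h)
  -- the compatibility relation D * B = -(Bᵀ * D)
  have hDsymm : Dᵀ = D := by
    ext i j
    by_cases h : i = j
    · rw [h, transpose_apply]
    · rw [transpose_apply, hD h, hD (Ne.symm h)]
  have hLB : L * B = -D := by
    have h1 := congrArg transpose hBL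
    rw [transpose_mul, transpose_transpose, hL, Matrix.neg_mul, hDsymm] at h1
    rw [← h1, neg_neg]
  have hDB : D * B = -(Bᵀ * D) := by
    rw [← hBL, Matrix.mul_assoc, hLB, Matrix.mul_neg, hBL]
  have hrel : ∀ i, D i i * B i k = -(B k i * D k k) := by
    intro i
    have h := congrFun (congrFun hDB i) k
    rw [hDmul B i k] at h
    have h2 : (Bᵀ * D) i k = B k i * D k k := by rw [hmulD Bᵀ i k, transpose_apply]
    rw [show (-(Bᵀ * D)) i k = -((Bᵀ * D) i k) from rfl, h2] at h
    exact h
  -- key pointwise identity: D i i * c i = D k k * r i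
  have hkey : ∀ i, D i i * c i = D k k * r i := by
    intro i
    by_cases hik : i = k
    · simp [hik, hc, hr]
    · simp only [hc, hr, if_neg hik]
      rw [mul_max_of_nonneg _ _ (hDpos i).le, mul_max_of_nonneg _ _ (hDpos k).le,
        mul_zero, mul_zero]
      congr 1
      linear_combination (-ε) * hrel i
  -- compute Fᵀ * D * E = D
  have hFDE : Fᵀ * D * E = D := by
    have hvD : vecMulVec r d * D = D k k • vecMulVec r d := by
      ext i j
      rw [hmulD, Matrix.smul_apply]
      simp only [vecMulVec_apply, smul_eq_mul, hd]
      by_cases hjk : j = k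
      · subst hjk; simp; ring
      · rw [if_neg hjk]; ring
    have hDv : D * vecMulVec c d = D k k • vecMulVec r d := by
      ext i j
      rw [hDmul, Matrix.smul_apply]
      simp only [vecMulVec_apply, smul_eq_mul]
      rw [← mul_assoc, hkey i]; ring
    have expand : (1 + vecMulVec r d) * D * (1 + vecMulVec c d)
        = D + D * vecMulVec c d + vecMulVec r d * D
          + vecMulVec r d * D * vecMulVec c d := by noncomm_ring
    rw [hFTeq, hEeq, expand, hvD, hDv, Matrix.smul_mul, hmulvv, hdc]
    ext i j
    simp only [Matrix.add_apply, Matrix.smul_apply, smul_eq_mul, vecMulVec_apply]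
    ring
  constructor
  · rw [transpose_mul, transpose_mul, transpose_transpose, hL]
    simp [Matrix.mul_assoc, Matrix.neg_mul, Matrix.mul_neg]
  · have hET : Eᵀ * Eᵀ = 1 := by rw [← transpose_mul, hEE, transpose_one]
    calc (E * B * F)ᵀ * (Eᵀ * L * E)
        = Fᵀ * Bᵀ * (Eᵀ * Eᵀ) * L * E := by
          simp only [transpose_mul, Matrix.mul_assoc]
      _ = Fᵀ * (Bᵀ * L) * E := by rw [hET]; simp only [Matrix.mul_assoc, Matrix.mul_one]
      _ = D := by rw [hBL, hFDE]
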